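/- (Theorem 4.1, case γ = 1: convergence of the one-dimensional implicit scheme.) Let α ∈ (1,2], integers N ≥ 2 and N_t ≥ 1, reals τ > 0 and Δx > 0, nonnegative reals c_{i,k} (1 ≤ i ≤ N-1, 1 ≤ k ≤ N_t), and set ω_{i,k} = -τ·κ_α·c_{i,k}/(Γ(4-α)·(Δx)^α) ≥ 0. Let R^k_i (1 ≤ i ≤ N-1, 1 ≤ k ≤ N_t) be reals and R_max = max_{i,k} |R^k_i|. Suppose real numbers ε^k_i satisfy ε^0_i = 0 for all i, ε^k_0 = ε^k_N = 0 for 1 ≤ k ≤ N_t, and for all 1 ≤ i ≤ N-1, 0 ≤ k ≤ N_t - 1: (1 - ω_{i,k+1}·g^{α,N}_{i,i})·ε^{k+1}_i - ω_{i,k+1}·Σ_{m=0, m≠i}^{N} g^{α,N}_{i,m}·ε^{k+1}_m = ε^k_i + R^{k+1}_i. Then for every 0 ≤ k ≤ N_t: max_{0≤i≤N} |ε^k_i| ≤ k·R_max. In particular, if T > 0, N_t·τ ≤ T and |R^k_i| ≤ C·τ·(τ + (Δx)^2) for all i, k, then max_{0≤i≤N} |ε^k_i| ≤ C·T·(τ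 + (Δx)^2) for all k. -/

import Mathlib

/-- The coefficients `a^ν_{j,m}` of the second-order discretization of the left
Riemann–Liouville fractional derivative. All powers are real powers. -/
noncomputable def aCoef (ν : ℝ) (j m : ℕ) : ℝ :=
  if m = j then 1
  else if m = 0 then ((j : ℝ) - 1) ^ (3 - ν) - (j : ℝ) ^ (2 - ν) * ((j : ℝ) - 3 + ν)
  else ((j : ℝ) - (m : ℝ) + 1) ^ (3 - ν) - 2 * ((j : ℝ) - (m : ℝ)) ^ (3 - ν)
    + ((j : ℝ) - (m : ℝ) - 1) ^ (3 - ν)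

/-- The coefficients `b^ν_{j,m}` of the second-order discretization of the right
Riemann–Liouville fractional derivative on a grid with `N` subintervals. -/
noncomputable def bCoef (ν : ℝ) (N j m : ℕ) : ℝ :=
  if m = j then 1
  else if m = N then (3 - ν - (N : ℝ) + (j : ℝ)) * ((N : ℝ) - (j : ℝ)) ^ (2 - ν)
    + ((N : ℝ) - (j : ℝ) - 1) ^ (3 - ν)
  else ((m : ℝ) - (j : ℝ) + 1) ^ (3 - ν) - 2 * ((m : ℝ) - (j : ℝ)) ^ (3 - ν)
    + ((m : ℝ) - (j : ℝ) - 1) ^ (3 - ν)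

/-- The coefficients `p^ν_{i,m}` (left-derivative part), for `1 ≤ i ≤ N-1`. -/
noncomputable def pCoef (ν : ℝ) (i m : ℕ) : ℝ :=
  if m < i then aCoef ν (i - 1) m - 2 * aCoef ν i m + aCoef ν (i + 1) m
  else if m = i then -2 * aCoef ν i i + aCoef ν (i + 1) i
  else if m = i + 1 then aCoef ν (i + 1) (i + 1)
  else 0

/-- The coefficients `q^ν_{i,m}` (right-derivative part), for `1 ≤ i ≤ N-1`. -/
noncomputable def qCoef (ν : ℝ) (N i m : ℕ) : ℝ :=
  if m + 1 < i then 0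
  else if m + 1 = i then bCoef ν N (i - 1) (i - 1)
  else if m = i then -2 * bCoef ν N i i + bCoef ν N (i - 1) i
  else bCoef ν N (i - 1) m - 2 * bCoef ν N i m + bCoef ν N (i + 1) m

/-- The Riesz-derivative difference coefficients `g^{ν,N}_{i,m} = p^ν_{i,m} + q^ν_{i,m}`. -/
noncomputable def gCoef (ν : ℝ) (N i m : ℕ) : ℝ := pCoef ν i m + qCoef ν N i m

/-- The L1 coefficients `l_s = (s+1)^(1-γ) - s^(1-γ)` of the Caputo discretization. -/
noncomputable def lCoef (γ : ℝ) (s : ℕ) : ℝ := ((s : ℝ) + 1) ^ (1 - γ) - (s : ℝ) ^ (1 - γ)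

/-- The Riesz constant `κ_ν = 1 / (2 cos(νπ/2))`. -/
noncomputable def kappa (ν : ℝ) : ℝ := 1 / (2 * Real.cos (ν * Real.pi / 2))

/-- The maximum of `|v i|` over `0 ≤ i ≤ N`. -/
noncomputable def maxAbs (N : ℕ) (v : ℕ → ℝ) : ℝ :=
  (Finset.range (N + 1)).sup' Finset.nonempty_range_add_one fun i => |v i|

/-- The maximum of `|v i j|` over `0 ≤ i ≤ Nx`, `0 ≤ j ≤ Ny`. -/
noncomputable def maxAbs2 (Nx Ny : ℕ) (v : ℕ → ℕ → ℝ) : ℝ :=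
  ((Finset.range (Nx + 1)) ×ˢ (Finset.range (Ny + 1))).sup'
    (Finset.nonempty_range_add_one.product Finset.nonempty_range_add_one) fun p => |v p.1 p.2|



open Set

/-- second difference of `x ^ s` -/
noncomputable def Gf (s : ℝ) (y : ℝ) : ℝ := (y+1)^s - 2*y^s + (y-1)^s

lemma Gf_one {s : ℝ} (hs : 0 < s) : Gf s 1 = 2^s - 2 := by
  unfold Gf
  norm_num [Real.zero_rpow hs.ne', Real.one_rpow]

lemma Gf_two {s : ℝ} : Gf s 2 = 3^s - 2*2^s + 1 := by
  unfold Gf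
  norm_num [Real.one_rpow]

noncomputable def Gf' (s : ℝ) (y : ℝ) : ℝ := s*(y+1)^(s-1) - 2*(s*y^(s-1)) + s*(y-1)^(s-1)

lemma hasDerivAt_Gf {s y : ℝ} (hy : 1 < y) : HasDerivAt (Gf s) (Gf' s y) y := by
  have h0 : (0:ℝ) < y - 1 := by linarith
  have h1 : HasDerivAt (fun x : ℝ => (x+1)^s) (1 * s * (y+1)^(s-1)) y :=
    ((hasDerivAt_id y).add_const 1).rpow_const (Or.inl (by simp only [id_eq]; intro h; linarith))
  have h2 : HasDerivAt (fun x : ℝ => x^s) (1 * s * y^(s-1)) y :=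
    (hasDerivAt_id y).rpow_const (Or.inl (by simp only [id_eq]; intro h; linarith))
  have h3 : HasDerivAt (fun x : ℝ => (x-1)^s) (1 * s * (y-1)^(s-1)) y :=
    ((hasDerivAt_id y).sub_const 1).rpow_const (Or.inl (by simp only [id_eq]; intro h; linarith))
  have h := (h1.sub (h2.const_mul 2)).add h3
  have hv : 1 * s * (y+1)^(s-1) - 2 * (1 * s * y^(s-1)) + 1 * s * (y-1)^(s-1) = Gf' s y := by
    unfold Gf'; ring
  rw [hv] at h
  exact h

lemma hasDerivAt_Gf' {s y : ℝ} (hy : 1 < y) :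
    HasDerivAt (Gf' s) (s*((s-1)*(y+1)^(s-2)) - 2*(s*((s-1)*y^(s-2))) + s*((s-1)*(y-1)^(s-2))) y := by
  have h1 : HasDerivAt (fun x : ℝ => (x+1)^(s-1)) (1 * (s-1) * (y+1)^(s-1-1)) y :=
    ((hasDerivAt_id y).add_const 1).rpow_const (Or.inl (by simp only [id_eq]; intro h; linarith))
  have h2 : HasDerivAt (fun x : ℝ => x^(s-1)) (1 * (s-1) * y^(s-1-1)) y :=
    (hasDerivAt_id y).rpow_const (Or.inl (by simp only [id_eq]; intro h; linarith))
  have h3 : HasDerivAt (fun x : ℝ => (x-1)^(s-1)) (1 * (s-1) * (y-1)^(s-1-1)) y :=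
    ((hasDerivAt_id y).sub_const 1).rpow_const (Or.inl (by simp only [id_eq]; intro h; linarith))
  have h := ((h1.const_mul s).sub ((h2.const_mul s).const_mul 2)).add (h3.const_mul s)
  have he : s - 1 - 1 = s - 2 := by ring
  have hv : s * (1 * (s-1) * (y+1)^(s-1-1)) - 2 * (s * (1 * (s-1) * y^(s-1-1)))
      + s * (1 * (s-1) * (y-1)^(s-1-1))
      = s*((s-1)*(y+1)^(s-2)) - 2*(s*((s-1)*y^(s-2))) + s*((s-1)*(y-1)^(s-2)) := by
    rw [he]; ring
  rw [hv] at h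
  exact h

/-- AM-GM style midpoint convexity for negative exponents. -/
lemma midpoint_neg_exponent {p y : ℝ} (hp : p < 0) (hy : 1 < y) :
    2*y^p ≤ (y-1)^p + (y+1)^p := by
  have h0 : (0:ℝ) < y - 1 := by linarith
  have h1 : (0:ℝ) < y + 1 := by linarith
  have hy0 : (0:ℝ) < y := by linarith
  set a := (y-1)^p with ha
  set b := (y+1)^p with hb
  set c := y^p with hc
  have hap : 0 < a := Real.rpow_pos_of_pos h0 p
  have hbp : 0 < b := Real.rpow_pos_of_pos h1 p
  have hcp : 0 < c := Real.rpow_pos_of_pos hy0 p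
  have hab : c * c ≤ a * b := by
    have e1 : a * b = ((y-1)*(y+1))^p := (Real.mul_rpow h0.le h1.le).symm
    have e2 : c * c = (y*y)^p := (Real.mul_rpow hy0.le hy0.le).symm
    rw [e1, e2]
    have : (y-1)*(y+1) ≤ y*y := by nlinarith
    exact Real.rpow_le_rpow_of_nonpos (by nlinarith) this hp.le
  nlinarith [sq_nonneg (a - b), sq_nonneg (a + b - 2*c)]

/-- midpoint concavity for exponents in `[0,1]`. -/
lemma midpoint_concave {q y : ℝ} (hq0 : 0 ≤ q) (hq1 : q ≤ 1) (hy : 1 < y) :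
    (y-1)^q + (y+1)^q ≤ 2*y^q := by
  have hcc := Real.concaveOn_rpow hq0 hq1
  have hmem1 : (y-1) ∈ Ici (0:ℝ) := by simp; linarith
  have hmem2 : (y+1) ∈ Ici (0:ℝ) := by simp; linarith
  have := hcc.2 hmem1 hmem2 (by norm_num : (0:ℝ) ≤ 1/2) (by norm_num : (0:ℝ) ≤ 1/2) (by norm_num)
  have harg : (1/2 : ℝ) • (y-1) + (1/2 : ℝ) • (y+1) = y := by simp; ring
  rw [harg] at this
  simp only [smul_eq_mul] at this
  linarith

lemma Gf_continuous {s : ℝ} (hs : 0 < s) : Continuous (Gf s) := by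
  have h1 : Continuous fun y : ℝ => (y+1)^s :=
    (Real.continuous_rpow_const hs.le).comp (continuous_id.add continuous_const)
  have h2 : Continuous fun y : ℝ => 2*y^s :=
    continuous_const.mul (Real.continuous_rpow_const hs.le)
  have h3 : Continuous fun y : ℝ => (y-1)^s :=
    (Real.continuous_rpow_const hs.le).comp (continuous_id.sub continuous_const)
  exact (h1.sub h2).add h3

lemma Gf_antitoneOn {s : ℝ} (hs1 : 1 ≤ s) (hs2 : s < 2) : AntitoneOn (Gf s) (Ici 1) := by
  have hs0 : (0:ℝ) < s := by linarith
  apply antitoneOn_of_deriv_nonpos (convex_Ici 1) ((Gf_continuous hs0).continuousOn)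
  · intro y hy
    rw [interior_Ici] at hy
    exact ((hasDerivAt_Gf hy).differentiableAt).differentiableWithinAt
  · intro y hy
    rw [interior_Ici] at hy
    rw [(hasDerivAt_Gf hy).deriv]
    have key : (y-1)^(s-1) + (y+1)^(s-1) ≤ 2*y^(s-1) :=
      midpoint_concave (by linarith) (by linarith) hy
    unfold Gf'
    nlinarith [key]

lemma Gf_convexOn {s : ℝ} (hs1 : 1 ≤ s) (hs2 : s < 2) : ConvexOn ℝ (Ici 1) (Gf s) := by
  have hs0 : (0:ℝ) < s := by linarith
  have hderiv : ∀ y ∈ Ioi (1:ℝ), deriv (Gf s) y = Gf' s y := fun y hy => (hasDerivAt_Gf hy).deriv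
  apply convexOn_of_deriv2_nonneg (convex_Ici 1) ((Gf_continuous hs0).continuousOn)
  · intro y hy
    rw [interior_Ici] at hy
    exact ((hasDerivAt_Gf hy).differentiableAt).differentiableWithinAt
  · rw [interior_Ici]
    apply DifferentiableOn.congr (f := Gf' s) (fun y hy => ((hasDerivAt_Gf' hy).differentiableAt).differentiableWithinAt)
    exact hderiv
  · intro y hy
    rw [interior_Ici] at hy
    have hev : deriv (Gf s) =ᶠ[nhds y] Gf' s := by
      filter_upwards [IsOpen.mem_nhds isOpen_Ioi hy] with z hz
      exact hderiv z hz
    have : deriv^[2] (Gf s) y = deriv (Gf' s) y := by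
      simp only [Function.iterate_succ, Function.iterate_zero, Function.comp_apply, id_eq]
      exact Filter.EventuallyEq.deriv_eq hev
    rw [this, (hasDerivAt_Gf' hy).deriv]
    rcases eq_or_lt_of_le hs1 with h1 | h1
    · simp [← h1]
    · have key : 2*y^(s-2) ≤ (y-1)^(s-2) + (y+1)^(s-2) :=
        midpoint_neg_exponent (by linarith) hy
      have hprod := mul_le_mul_of_nonneg_left key (by nlinarith : (0:ℝ) ≤ s*(s-1))
      nlinarith [hprod]


lemma nine_log3_le : 9 * Real.log 3 ≤ 16 * Real.log 2 := by
  have h : Real.log ((3:ℝ)^(9:ℕ)) ≤ Real.log ((2:ℝ)^(16:ℕ)) := by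
    apply Real.log_le_log (by positivity)
    norm_num
  rw [Real.log_pow, Real.log_pow] at h
  push_cast at h
  linarith

lemma w1_nonneg {s : ℝ} (hs1 : 1 ≤ s) (hs2 : s ≤ 2) : 0 ≤ 3^s - 4*2^s + (7:ℝ) := by
  set φ : ℝ → ℝ := fun u => 3^u - 4*2^u + 7 with hφ
  have hder : ∀ u : ℝ, HasDerivAt φ (3^u * Real.log 3 - 4*(2^u * Real.log 2)) u := by
    intro u
    have h3 : HasDerivAt (fun u : ℝ => (3:ℝ)^u) ((3:ℝ)^u * Real.log 3) u :=
      (Real.hasStrictDerivAt_const_rpow (by norm_num) u).hasDerivAt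
    have h2 : HasDerivAt (fun u : ℝ => (2:ℝ)^u) ((2:ℝ)^u * Real.log 2) u :=
      (Real.hasStrictDerivAt_const_rpow (by norm_num) u).hasDerivAt
    exact ((h3.sub (h2.const_mul 4)).add_const 7)
  have hanti : AntitoneOn φ (Set.Icc 1 2) := by
    apply antitoneOn_of_deriv_nonpos (convex_Icc 1 2)
    · exact Continuous.continuousOn (by
        have := fun u : ℝ => (hder u).differentiableAt
        exact Differentiable.continuous this)
    · intro u hu
      exact ((hder u).differentiableAt).differentiableWithinAt
    · intro u hu
      rw [interior_Icc] at hu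
      rw [(hder u).deriv]
      -- show 3^u log 3 ≤ 4 * 2^u log 2
      have h32 : (3:ℝ)^u = (3/2:ℝ)^u * 2^u := by
        rw [← Real.mul_rpow (by norm_num) (by norm_num)]; norm_num
      have hb : ((3:ℝ)/2)^u ≤ 9/4 := by
        have : ((3:ℝ)/2)^u ≤ (3/2:ℝ)^(2:ℝ) :=
          Real.rpow_le_rpow_of_exponent_le (by norm_num) (le_of_lt hu.2)
        have h2 : ((3:ℝ)/2)^(2:ℝ) = 9/4 := by
          rw [show (2:ℝ) = ((2:ℕ):ℝ) by norm_num, Real.rpow_natCast]; norm_num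
        linarith
      have hlog3 : (0:ℝ) ≤ Real.log 3 := Real.log_nonneg (by norm_num)
      have hlog2 : (0:ℝ) ≤ Real.log 2 := Real.log_nonneg (by norm_num)
      have h2pos : (0:ℝ) < 2^u := Real.rpow_pos_of_pos (by norm_num) u
      have h9 := nine_log3_le
      rw [h32]
      have h1 : (3/2:ℝ)^u * 2^u * Real.log 3 ≤ (9/4) * 2^u * Real.log 3 := by
        have : (3/2:ℝ)^u * 2^u ≤ (9/4) * 2^u := by nlinarith
        nlinarith
      have h2' : (9/4:ℝ) * 2^u * Real.log 3 ≤ 4 * (2^u * Real.log 2) := by nlinarith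
      linarith
  have h2 : φ 2 = 0 := by
    have e3 : (3:ℝ)^(2:ℝ) = 9 := by
      rw [show (2:ℝ) = ((2:ℕ):ℝ) by norm_num, Real.rpow_natCast]; norm_num
    have e2 : (2:ℝ)^(2:ℝ) = 4 := by
      rw [show (2:ℝ) = ((2:ℕ):ℝ) by norm_num, Real.rpow_natCast]; norm_num
    simp only [hφ, e3, e2]; ring
  have hkey : φ 2 ≤ φ s := hanti ⟨hs1, hs2⟩ (by norm_num) hs2
  rw [h2] at hkey
  simpa [hφ] using hkey

noncomputable def wv (s : ℝ) : ℕ → ℝ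
  | 0 => 2*2^s - 8
  | 1 => 3^s - 4*2^s + 7
  | (d+2) => Gf s ((d:ℝ)+3) - 2*Gf s ((d:ℝ)+2) + Gf s ((d:ℝ)+1)

lemma two_rpow_le_four {s : ℝ} (hs : s ≤ 2) : (2:ℝ)^s ≤ 4 := by
  have := Real.rpow_le_rpow_of_exponent_le (by norm_num : (1:ℝ) ≤ 2) hs
  have h4 : (2:ℝ)^(2:ℝ) = 4 := by
    rw [show (2:ℝ) = ((2:ℕ):ℝ) by norm_num, Real.rpow_natCast]; norm_num
  linarith

lemma wv_nonneg {s : ℝ} (hs1 : 1 ≤ s) (hs2 : s < 2) {d : ℕ} (hd : 1 ≤ d) : 0 ≤ wv s d := by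
  match d, hd with
  | 1, _ => exact w1_nonneg hs1 hs2.le
  | (e+2), _ =>
    show 0 ≤ Gf s ((e:ℝ)+3) - 2*Gf s ((e:ℝ)+2) + Gf s ((e:ℝ)+1)
    have hconv := Gf_convexOn hs1 hs2
    have h1 : ((e:ℝ)+1) ∈ Set.Ici (1:ℝ) := by
      simp only [Set.mem_Ici]
      have : (0:ℝ) ≤ (e:ℝ) := Nat.cast_nonneg e
      linarith
    have h3 : ((e:ℝ)+3) ∈ Set.Ici (1:ℝ) := by
      simp only [Set.mem_Ici]
      have : (0:ℝ) ≤ (e:ℝ) := Nat.cast_nonneg e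
      linarith
    have hmid := hconv.2 h1 h3 (by norm_num : (0:ℝ) ≤ 1/2) (by norm_num : (0:ℝ) ≤ 1/2) (by norm_num)
    have harg : (1/2 : ℝ) • ((e:ℝ)+1) + (1/2 : ℝ) • ((e:ℝ)+3) = (e:ℝ)+2 := by
      simp only [smul_eq_mul]; ring
    rw [harg] at hmid
    simp only [smul_eq_mul] at hmid
    linarith

lemma wv_sum_eq {s : ℝ} (hs1 : 1 ≤ s) (hs2 : s < 2) (n : ℕ) (hn : 1 ≤ n) :
    ∑ d ∈ Finset.Icc 1 n, wv s d = Gf s ((n:ℝ)+1) - Gf s (n:ℝ) + 4 - 2^s := by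
  induction n with
  | zero => omega
  | succ m ih =>
    rcases Nat.eq_or_lt_of_le hn with h1 | h1
    · -- m + 1 = 1, i.e. m = 0
      have hm : m = 0 := by omega
      subst hm
      simp only [Finset.Icc_self, Finset.sum_singleton]
      show wv s 1 = _
      have e1 : Gf s ((1:ℕ):ℝ) = 2^s - 2 := by
        rw [show (((1:ℕ):ℝ)) = (1:ℝ) by norm_num]; exact Gf_one (by linarith)
      have e2 : Gf s (((1:ℕ):ℝ)+1) = 3^s - 2*2^s + 1 := by
        rw [show (((1:ℕ):ℝ)+1) = (2:ℝ) by norm_num]; exact Gf_two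
      rw [e1, e2]
      show 3^s - 4*2^s + 7 = _
      ring
    · have hm1 : 1 ≤ m := by omega
      have hsum : ∑ d ∈ Finset.Icc 1 (m+1), wv s d
          = (∑ d ∈ Finset.Icc 1 m, wv s d) + wv s (m+1) := by
        exact Finset.sum_Icc_succ_top (by omega) _
      rw [hsum, ih hm1]
      obtain ⟨e, he⟩ : ∃ e, m = e + 1 := ⟨m - 1, by omega⟩
      subst he
      show _ + wv s (e+2) = _
      show _ + (Gf s ((e:ℝ)+3) - 2*Gf s ((e:ℝ)+2) + Gf s ((e:ℝ)+1)) = _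
      push_cast
      have e1 : (e:ℝ) + 1 + 1 = (e:ℝ) + 2 := by ring
      rw [e1]
      have e2 : (e:ℝ) + 2 + 1 = (e:ℝ) + 3 := by ring
      rw [e2]
      ring

lemma wv_sum_le {s : ℝ} (hs1 : 1 ≤ s) (hs2 : s < 2) (n : ℕ) :
    ∑ d ∈ Finset.Icc 1 n, wv s d ≤ 4 - 2^s := by
  rcases Nat.eq_zero_or_pos n with h | h
  · subst h
    simp only [show Finset.Icc 1 0 = ∅ by rfl, Finset.sum_empty]
    have := two_rpow_le_four hs2.le
    linarith
  · rw [wv_sum_eq hs1 hs2 n h]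
    have hanti := Gf_antitoneOn hs1 hs2
    have h1 : (n:ℝ) ∈ Set.Ici (1:ℝ) := by
      simp only [Set.mem_Ici]; exact_mod_cast h
    have h2 : ((n:ℝ)+1) ∈ Set.Ici (1:ℝ) := by
      simp only [Set.mem_Ici]
      have : (1:ℝ) ≤ (n:ℝ) := by exact_mod_cast h
      linarith
    have := hanti h1 h2 (by linarith [h1.out])
    linarith


section coef
variable {ν : ℝ} {N : ℕ}

lemma aCoef_diag (j : ℕ) : aCoef ν j j = 1 := by unfold aCoef; simp

lemma aCoef_inner {j m : ℕ} (h1 : 1 ≤ m) (h2 : m < j) :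
    aCoef ν j m = Gf (3-ν) ((j:ℝ) - (m:ℝ)) := by
  unfold aCoef Gf
  rw [if_neg (by omega), if_neg (by omega)]

lemma bCoef_diag (j : ℕ) : bCoef ν N j j = 1 := by unfold bCoef; simp

lemma bCoef_inner {j m : ℕ} (h1 : j < m) (h2 : m < N) :
    bCoef ν N j m = Gf (3-ν) ((m:ℝ) - (j:ℝ)) := by
  unfold bCoef Gf
  rw [if_neg (by omega), if_neg (by omega)]

lemma gCoef_diag (hN : 2 ≤ N) {i : ℕ} (hi1 : 1 ≤ i) (hiN : i ≤ N - 1) (hν : 0 < 3 - ν) :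
    gCoef ν N i i = 2*2^(3-ν) - 8 := by
  unfold gCoef pCoef qCoef
  rw [if_neg (lt_irrefl i), if_pos rfl, if_neg (by omega), if_neg (by omega), if_pos rfl]
  rw [aCoef_diag, bCoef_diag]
  rw [aCoef_inner (by omega) (by omega), bCoef_inner (by omega) (by omega)]
  have e1 : ((i+1:ℕ):ℝ) - (i:ℝ) = 1 := by push_cast; ring
  have e2 : ((i:ℕ):ℝ) - ((i-1:ℕ):ℝ) = 1 := by
    have : ((i-1:ℕ):ℝ) = (i:ℝ) - 1 := by
      rw [Nat.cast_sub hi1]; norm_num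
    rw [this]; ring
  rw [e1, e2, Gf_one hν]
  ring

lemma gCoef_left (hN : 2 ≤ N) {i m : ℕ} (hi1 : 1 ≤ i) (hiN : i ≤ N - 1)
    (hm1 : 1 ≤ m) (hmi : m < i) (hν : 0 < 3 - ν) :
    gCoef ν N i m = wv (3-ν) (i - m) := by
  rcases Nat.eq_or_lt_of_le (show m + 1 ≤ i by omega) with h | h
  · -- m = i - 1
    have him : i = m + 1 := by omega
    subst him
    unfold gCoef pCoef qCoef
    rw [if_pos (by omega), if_neg (by omega), if_pos rfl]
    have hd : m + 1 - 1 = m := by omega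
    rw [hd, aCoef_diag, bCoef_diag]
    rw [aCoef_inner (by omega) (by omega), aCoef_inner (by omega) (by omega)]
    have e1 : ((m+1:ℕ):ℝ) - (m:ℝ) = 1 := by push_cast; ring
    have e2 : ((m+1+1:ℕ):ℝ) - (m:ℝ) = 2 := by push_cast; ring
    rw [e1, e2, Gf_one hν, Gf_two]
    have : m + 1 - m = 1 := by omega
    rw [this]
    show _ = 3^(3-ν) - 4*2^(3-ν) + 7
    ring
  · -- m ≤ i - 2
    obtain ⟨d, hd⟩ : ∃ d, i = m + 2 + d := ⟨i - m - 2, by omega⟩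
    subst hd
    unfold gCoef pCoef qCoef
    rw [if_pos (by omega : m < m + 2 + d), if_pos (by omega : m + 1 < m + 2 + d)]
    have h1 : m + 2 + d - 1 = m + 1 + d := by omega
    rw [h1]
    rw [aCoef_inner (by omega) (by omega), aCoef_inner (by omega) (by omega),
      aCoef_inner (by omega) (by omega)]
    have h2 : m + 2 + d - m = d + 2 := by omega
    rw [h2]
    show _ + 0 = wv (3-ν) (d+2)
    show _ = Gf (3-ν) ((d:ℝ)+3) - 2*Gf (3-ν) ((d:ℝ)+2) + Gf (3-ν) ((d:ℝ)+1)
    have e1 : ((m+1+d:ℕ):ℝ) - (m:ℝ) = (d:ℝ)+1 := by push_cast; ring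
    have e2 : ((m+2+d:ℕ):ℝ) - (m:ℝ) = (d:ℝ)+2 := by push_cast; ring
    have e3 : ((m+2+d+1:ℕ):ℝ) - (m:ℝ) = (d:ℝ)+3 := by push_cast; ring
    rw [e1, e2, e3]
    ring

lemma gCoef_right (hN : 2 ≤ N) {i m : ℕ} (hi1 : 1 ≤ i) (hiN : i ≤ N - 1)
    (him : i < m) (hmN : m ≤ N - 1) (hν : 0 < 3 - ν) :
    gCoef ν N i m = wv (3-ν) (m - i) := by
  rcases Nat.eq_or_lt_of_le (show i + 1 ≤ m by omega) with h | h
  · -- m = i + 1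
    have hm : m = i + 1 := by omega
    subst hm
    unfold gCoef pCoef qCoef
    rw [if_neg (by omega), if_neg (by omega), if_pos rfl, if_neg (by omega), if_neg (by omega),
      if_neg (by omega)]
    rw [aCoef_diag, bCoef_diag]
    rw [bCoef_inner (by omega) (by omega), bCoef_inner (by omega) (by omega)]
    have e1 : ((i+1:ℕ):ℝ) - ((i:ℕ):ℝ) = 1 := by push_cast; ring
    have e2 : ((i+1:ℕ):ℝ) - ((i-1:ℕ):ℝ) = 2 := by
      have : ((i-1:ℕ):ℝ) = (i:ℝ) - 1 := by
        rw [Nat.cast_sub hi1]; norm_num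
      rw [this]; push_cast; ring
    rw [e1, e2, Gf_one hν, Gf_two]
    have : i + 1 - i = 1 := by omega
    rw [this]
    show _ = 3^(3-ν) - 4*2^(3-ν) + 7
    ring
  · -- m ≥ i + 2
    obtain ⟨d, hd⟩ : ∃ d, m = i + 2 + d := ⟨m - i - 2, by omega⟩
    subst hd
    unfold gCoef pCoef qCoef
    rw [if_neg (by omega), if_neg (by omega), if_neg (by omega), if_neg (by omega),
      if_neg (by omega), if_neg (by omega)]
    rw [bCoef_inner (by omega) (by omega), bCoef_inner (by omega) (by omega),
      bCoef_inner (by omega) (by omega)]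
    have h2 : i + 2 + d - i = d + 2 := by omega
    rw [h2]
    show 0 + _ = wv (3-ν) (d+2)
    show _ = Gf (3-ν) ((d:ℝ)+3) - 2*Gf (3-ν) ((d:ℝ)+2) + Gf (3-ν) ((d:ℝ)+1)
    have e1 : ((i+2+d:ℕ):ℝ) - ((i-1:ℕ):ℝ) = (d:ℝ)+3 := by
      have : ((i-1:ℕ):ℝ) = (i:ℝ) - 1 := by
        rw [Nat.cast_sub hi1]; norm_num
      rw [this]; push_cast; ring
    have e2 : ((i+2+d:ℕ):ℝ) - ((i:ℕ):ℝ) = (d:ℝ)+2 := by push_cast; ring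
    have e3 : ((i+2+d:ℕ):ℝ) - ((i+1:ℕ):ℝ) = (d:ℝ)+1 := by push_cast; ring
    rw [e1, e2, e3]
    ring

end coef

section gsum
variable {ν : ℝ} {N : ℕ}

lemma gCoef_erase_sum_le (hν1 : 1 ≤ 3-ν) (hν2 : 3-ν < 2) (hN : 2 ≤ N) {i : ℕ}
    (hi1 : 1 ≤ i) (hiN : i ≤ N-1) :
    ∑ m ∈ (Finset.Icc 1 (N-1)).erase i, gCoef ν N i m ≤ 8 - 2*2^(3-ν) := by
  have hν0 : 0 < 3 - ν := by linarith
  have hsplit : (Finset.Icc 1 (N-1)).erase i = Finset.Icc 1 (i-1) ∪ Finset.Icc (i+1) (N-1) := by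
    ext m
    simp only [Finset.mem_erase, Finset.mem_Icc, Finset.mem_union]
    omega
  have hdisj : Disjoint (Finset.Icc 1 (i-1)) (Finset.Icc (i+1) (N-1)) := by
    apply Finset.disjoint_left.mpr
    intro m hm hm2
    simp only [Finset.mem_Icc] at hm hm2
    omega
  rw [hsplit, Finset.sum_union hdisj]
  have hleft : ∑ m ∈ Finset.Icc 1 (i-1), gCoef ν N i m = ∑ d ∈ Finset.Icc 1 (i-1), wv (3-ν) d := by
    refine Finset.sum_bij' (fun m _ => i - m) (fun d _ => i - d) ?_ ?_ ?_ ?_ ?_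
    · intro a ha; simp only [Finset.mem_Icc] at ha ⊢; omega
    · intro a ha; simp only [Finset.mem_Icc] at ha ⊢; omega
    · intro a ha; simp only [Finset.mem_Icc] at ha ⊢; omega
    · intro a ha; simp only [Finset.mem_Icc] at ha ⊢; omega
    · intro a ha
      simp only [Finset.mem_Icc] at ha
      exact gCoef_left hN hi1 hiN ha.1 (by omega) hν0
  have hright : ∑ m ∈ Finset.Icc (i+1) (N-1), gCoef ν N i m
      = ∑ d ∈ Finset.Icc 1 (N-1-i), wv (3-ν) d := by
    refine Finset.sum_bij' (fun m _ => m - i) (fun d _ => i + d) ?_ ?_ ?_ ?_ ?_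
    · intro a ha; simp only [Finset.mem_Icc] at ha ⊢; omega
    · intro a ha; simp only [Finset.mem_Icc] at ha ⊢; omega
    · intro a ha; simp only [Finset.mem_Icc] at ha ⊢; omega
    · intro a ha; simp only [Finset.mem_Icc] at ha ⊢; omega
    · intro a ha
      simp only [Finset.mem_Icc] at ha
      exact gCoef_right hN hi1 hiN (by omega) ha.2 hν0
  rw [hleft, hright]
  have h1 := wv_sum_le hν1 hν2 (i-1)
  have h2 := wv_sum_le hν1 hν2 (N-1-i)
  linarith

lemma gCoef_offdiag_nonneg (hν1 : 1 ≤ 3-ν) (hν2 : 3-ν < 2) (hN : 2 ≤ N) {i m : ℕ}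
    (hi1 : 1 ≤ i) (hiN : i ≤ N-1) (hm1 : 1 ≤ m) (hmN : m ≤ N-1) (hne : m ≠ i) :
    0 ≤ gCoef ν N i m := by
  have hν0 : 0 < 3 - ν := by linarith
  rcases Nat.lt_or_ge m i with h | h
  · rw [gCoef_left hN hi1 hiN hm1 h hν0]
    exact wv_nonneg hν1 hν2 (by omega)
  · have h' : i < m := by omega
    rw [gCoef_right hN hi1 hiN h' hmN hν0]
    exact wv_nonneg hν1 hν2 (by omega)

end gsum

set_option maxHeartbeats 1000000 in
/-- Theorem 4.1 (case `γ = 1`): convergence of the one-dimensional implicit scheme.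
Here `ε k i` is the error and `R k i` the local truncation error, with `Rmax` the
maximum of `|R^k_i|`. -/
theorem implicit_1d_convergence_gamma_one (α : ℝ) (hα : α ∈ Set.Ioc (1:ℝ) 2)
    (N Nt : ℕ) (hN : 2 ≤ N) (hNt : 1 ≤ Nt)
    (τ Δx : ℝ) (hτ : 0 < τ) (hΔx : 0 < Δx)
    (c : ℕ → ℕ → ℝ)
    (hc : ∀ i k : ℕ, 1 ≤ i → i ≤ N - 1 → 1 ≤ k → k ≤ Nt → 0 ≤ c i k)
    (ω : ℕ → ℕ → ℝ)
    (hω : ∀ i k : ℕ, 1 ≤ i → i ≤ N - 1 → 1 ≤ k → k ≤ Nt →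
      ω i k = -(τ * kappa α * c i k) / (Real.Gamma (4 - α) * Δx ^ α))
    (R : ℕ → ℕ → ℝ) (Rmax : ℝ)
    (hRmax : IsGreatest
      {x : ℝ | ∃ i k : ℕ, 1 ≤ i ∧ i ≤ N - 1 ∧ 1 ≤ k ∧ k ≤ Nt ∧ x = |R k i|} Rmax)
    (ε : ℕ → ℕ → ℝ)
    (hinit : ∀ i : ℕ, i ≤ N → ε 0 i = 0)
    (hbc : ∀ k : ℕ, 1 ≤ k → k ≤ Nt → ε k 0 = 0 ∧ ε k N = 0)
    (hscheme : ∀ i k : ℕ, 1 ≤ i → i ≤ N - 1 → k + 1 ≤ Nt →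
      (1 - ω i (k + 1) * gCoef α N i i) * ε (k + 1) i
        - ω i (k + 1) * ∑ m ∈ (Finset.range (N + 1)).erase i, gCoef α N i m * ε (k + 1) m
      = ε k i + R (k + 1) i) :
    (∀ k : ℕ, k ≤ Nt → maxAbs N (ε k) ≤ (k : ℝ) * Rmax) ∧
    (∀ T C : ℝ, 0 < T → (Nt : ℝ) * τ ≤ T → 0 < C →
      (∀ i k : ℕ, 1 ≤ i → i ≤ N - 1 → 1 ≤ k → k ≤ Nt →
        |R k i| ≤ C * τ * (τ + Δx ^ 2)) →
      ∀ k : ℕ, k ≤ Nt → maxAbs N (ε k) ≤ C * T * (τ + Δx ^ 2)) := by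
  obtain ⟨hα1, hα2⟩ := hα
  have hs1 : (1:ℝ) ≤ 3 - α := by linarith
  have hs2 : (3:ℝ) - α < 2 := by linarith
  have hs0 : (0:ℝ) < 3 - α := by linarith
  -- Rmax is attained and nonnegative
  obtain ⟨i', k', hi'1, hi'2, hk'1, hk'2, hReq⟩ := hRmax.1
  have hRnn : 0 ≤ Rmax := by rw [hReq]; exact abs_nonneg _
  -- ω is nonnegative
  have hκ : kappa α ≤ 0 := by
    unfold kappa
    have hπ : 0 < Real.pi := Real.pi_pos
    have hcos : Real.cos (α * Real.pi / 2) ≤ 0 := by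
      apply Real.cos_nonpos_of_pi_div_two_le_of_le
      · nlinarith
      · nlinarith
    apply div_nonpos_of_nonneg_of_nonpos (by norm_num)
    linarith
  have hωnn : ∀ i k : ℕ, 1 ≤ i → i ≤ N - 1 → 1 ≤ k → k ≤ Nt → 0 ≤ ω i k := by
    intro i k h1 h2 h3 h4
    rw [hω i k h1 h2 h3 h4]
    apply div_nonneg
    · have hci := hc i k h1 h2 h3 h4
      nlinarith [mul_nonneg (mul_nonneg hτ.le (neg_nonneg.mpr hκ)) hci]
    · have hg := Real.Gamma_pos_of_pos (show (0:ℝ) < 4 - α by linarith)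
      have hx := Real.rpow_pos_of_pos hΔx α
      exact (mul_pos hg hx).le
  -- basic facts about maxAbs
  have hms : ∀ k i : ℕ, i ≤ N → |ε k i| ≤ maxAbs N (ε k) := by
    intro k i hi
    unfold maxAbs
    exact Finset.le_sup' (fun j => |ε k j|) (Finset.mem_range.mpr (by omega))
  have hmnn : ∀ k : ℕ, 0 ≤ maxAbs N (ε k) := fun k =>
    le_trans (abs_nonneg (ε k 0)) (hms k 0 (by omega))
  -- the key one-step estimate
  have key : ∀ k : ℕ, k + 1 ≤ Nt → maxAbs N (ε (k+1)) ≤ maxAbs N (ε k) + Rmax := by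
    intro k hk
    obtain ⟨i0, hi0mem, hi0⟩ :=
      Finset.exists_mem_eq_sup' (Finset.nonempty_range_add_one (n := N)) (fun i => |ε (k+1) i|)
    have hi0N : i0 ≤ N := by
      have := Finset.mem_range.mp hi0mem; omega
    have hi0eq : maxAbs N (ε (k+1)) = |ε (k+1) i0| := by unfold maxAbs; exact hi0
    by_cases hbd : i0 = 0 ∨ i0 = N
    · have hz : ε (k+1) i0 = 0 := by
        rcases hbd with h | h
        · rw [h]; exact (hbc (k+1) (by omega) hk).1
        · rw [h]; exact (hbc (k+1) (by omega) hk).2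
      rw [hi0eq, hz]
      simp only [abs_zero]
      have := hmnn k
      linarith
    · push_neg at hbd
      have hi01 : 1 ≤ i0 := by omega
      have hi0N1 : i0 ≤ N - 1 := by omega
      have hsch := hscheme i0 k hi01 hi0N1 hk
      have hω0 : 0 ≤ ω i0 (k+1) := hωnn i0 (k+1) hi01 hi0N1 (by omega) hk
      have hgd : gCoef α N i0 i0 = 2*2^(3-α) - 8 := gCoef_diag hN hi01 hi0N1 hs0
      have h2s : (2:ℝ)^(3-α) ≤ 4 := two_rpow_le_four hs2.le
      set M := maxAbs N (ε (k+1)) with hM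
      have hMnn : 0 ≤ M := hmnn (k+1)
      -- bound the off-diagonal sum
      have hsum : |∑ m ∈ (Finset.range (N+1)).erase i0, gCoef α N i0 m * ε (k+1) m|
          ≤ (8 - 2*2^(3-α)) * M := by
        have step1 : |∑ m ∈ (Finset.range (N+1)).erase i0, gCoef α N i0 m * ε (k+1) m|
            ≤ ∑ m ∈ (Finset.range (N+1)).erase i0, |gCoef α N i0 m * ε (k+1) m| :=
          Finset.abs_sum_le_sum_abs _ _
        have step2 : ∑ m ∈ (Finset.range (N+1)).erase i0, |gCoef α N i0 m * ε (k+1) m|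
            = ∑ m ∈ (Finset.Icc 1 (N-1)).erase i0, |gCoef α N i0 m * ε (k+1) m| := by
          symm
          apply Finset.sum_subset
          · intro m hm
            simp only [Finset.mem_erase, Finset.mem_Icc] at hm
            simp only [Finset.mem_erase, Finset.mem_range]
            omega
          · intro m hm hnm
            simp only [Finset.mem_erase, Finset.mem_range] at hm
            simp only [Finset.mem_erase, Finset.mem_Icc] at hnm
            have hm0N : m = 0 ∨ m = N := by omega
            have hz : ε (k+1) m = 0 := by
              rcases hm0N with h | h
              · rw [h]; exact (hbc (k+1) (by omega) hk).1
              · rw [h]; exact (hbc (k+1) (by omega) hk).2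
            rw [hz, mul_zero, abs_zero]
        have step3 : ∑ m ∈ (Finset.Icc 1 (N-1)).erase i0, |gCoef α N i0 m * ε (k+1) m|
            ≤ ∑ m ∈ (Finset.Icc 1 (N-1)).erase i0, gCoef α N i0 m * M := by
          apply Finset.sum_le_sum
          intro m hm
          simp only [Finset.mem_erase, Finset.mem_Icc] at hm
          have hg0 : 0 ≤ gCoef α N i0 m :=
            gCoef_offdiag_nonneg hs1 hs2 hN hi01 hi0N1 hm.2.1 hm.2.2 hm.1
          rw [abs_mul, abs_of_nonneg hg0]
          apply mul_le_mul_of_nonneg_left _ hg0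
          rw [hM]
          exact hms (k+1) m (by omega)
        have step4 : ∑ m ∈ (Finset.Icc 1 (N-1)).erase i0, gCoef α N i0 m * M
            ≤ (8 - 2*2^(3-α)) * M := by
          rw [← Finset.sum_mul]
          exact mul_le_mul_of_nonneg_right (gCoef_erase_sum_le hs1 hs2 hN hi01 hi0N1) hMnn
        linarith
      -- assemble
      have hRb : |R (k+1) i0| ≤ Rmax := hRmax.2 ⟨i0, k+1, hi01, hi0N1, by omega, hk, rfl⟩
      have hεk : |ε k i0| ≤ maxAbs N (ε k) := hms k i0 hi0N
      have hA : (1 : ℝ) ≤ 1 - ω i0 (k+1) * gCoef α N i0 i0 := by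
        rw [hgd]; nlinarith
      have heq : (1 - ω i0 (k+1) * gCoef α N i0 i0) * ε (k+1) i0
          = ε k i0 + R (k+1) i0
            + ω i0 (k+1) * ∑ m ∈ (Finset.range (N+1)).erase i0, gCoef α N i0 m * ε (k+1) m := by
        linarith [hsch]
      have habs : (1 - ω i0 (k+1) * gCoef α N i0 i0) * M
          ≤ maxAbs N (ε k) + Rmax + ω i0 (k+1) * ((8 - 2*2^(3-α)) * M) := by
        have h1 : (1 - ω i0 (k+1) * gCoef α N i0 i0) * M
            = |(1 - ω i0 (k+1) * gCoef α N i0 i0) * ε (k+1) i0| := by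
          rw [abs_mul, abs_of_nonneg (by linarith : (0:ℝ) ≤ 1 - ω i0 (k+1) * gCoef α N i0 i0),
            ← hi0eq]
        rw [h1, heq]
        calc |ε k i0 + R (k+1) i0 + ω i0 (k+1) * ∑ m ∈ (Finset.range (N+1)).erase i0,
                gCoef α N i0 m * ε (k+1) m|
            ≤ |ε k i0| + |R (k+1) i0|
              + ω i0 (k+1) * |∑ m ∈ (Finset.range (N+1)).erase i0,
                  gCoef α N i0 m * ε (k+1) m| := by
              have := abs_add_le (ε k i0 + R (k+1) i0) (ω i0 (k+1) * ∑ m ∈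
                (Finset.range (N+1)).erase i0, gCoef α N i0 m * ε (k+1) m)
              have h2 := abs_add_le (ε k i0) (R (k+1) i0)
              have h3 : |ω i0 (k+1) * ∑ m ∈ (Finset.range (N+1)).erase i0,
                  gCoef α N i0 m * ε (k+1) m| = ω i0 (k+1) * |∑ m ∈
                  (Finset.range (N+1)).erase i0, gCoef α N i0 m * ε (k+1) m| := by
                rw [abs_mul, abs_of_nonneg hω0]
              linarith
          _ ≤ maxAbs N (ε k) + Rmax + ω i0 (k+1) * ((8 - 2*2^(3-α)) * M) := by
              have := mul_le_mul_of_nonneg_left hsum hω0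
              linarith
      rw [hgd] at habs
      nlinarith [habs, hω0, hMnn]
  -- part 1: induction on k
  have part1 : ∀ k : ℕ, k ≤ Nt → maxAbs N (ε k) ≤ (k : ℝ) * Rmax := by
    intro k
    induction k with
    | zero =>
      intro _
      have h0 : maxAbs N (ε 0) ≤ 0 := by
        unfold maxAbs
        apply Finset.sup'_le
        intro i hi
        have : ε 0 i = 0 := hinit i (by
          have := Finset.mem_range.mp hi; omega)
        rw [this]; simp
      simpa using h0
    | succ k ih =>
      intro hk
      have h1 := key k hk
      have h2 := ih (by omega)
      push_cast
      linarith
  refine ⟨part1, ?_⟩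
  intro T C hT hNtτ hC hRb k hk
  have h1 := part1 k hk
  have hRle : Rmax ≤ C * τ * (τ + Δx^2) := by
    rw [hReq]; exact hRb i' k' hi'1 hi'2 hk'1 hk'2
  have hkN : (k:ℝ) ≤ (Nt:ℝ) := by exact_mod_cast hk
  have hknn : (0:ℝ) ≤ (k:ℝ) := Nat.cast_nonneg k
  have hτΔ : (0:ℝ) < τ + Δx^2 := by positivity
  have c1 : (k:ℝ) * Rmax ≤ (Nt:ℝ) * Rmax := mul_le_mul_of_nonneg_right hkN hRnn
  have c2 : (Nt:ℝ) * Rmax ≤ (Nt:ℝ) * (C * τ * (τ + Δx^2)) :=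
    mul_le_mul_of_nonneg_left hRle (Nat.cast_nonneg Nt)
  have c3 : (Nt:ℝ) * (C * τ * (τ + Δx^2)) = C * ((Nt:ℝ) * τ) * (τ + Δx^2) := by ring
  have c4 : C * ((Nt:ℝ) * τ) * (τ + Δx^2) ≤ C * T * (τ + Δx^2) := by nlinarith
  linarith
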